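/- Let n ≥ 1, m ∈ ℕ ∪ {0}, 0 ≤ α < n, 0 < δ < 1 with mδ < n − α, α̃ = mδ + α, and suppose δ̃ = δ = α̃ − n/r, i.e. r = n/(α̃ − δ) if α̃ > δ and r = ∞ if α̃ = δ (note that necessarily 1 < r ≤ ∞). If w is a locally integrable weight and the pair (v,w) belongs to H(r, α̃, δ̃), then v = 0 almost everywhere in ℝⁿ. -/

import Mathlib

open MeasureTheory Metric ENNReal NNReal

noncomputable section

/-- Euclidean space `ℝⁿ`. -/
abbrev E (n : ℕ) := EuclideanSpace ℝ (Fin n)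

/-- `(∫ f^p dμ)^(1/p)` for finite `p`, and the essential supremum for `p = ∞`. -/
noncomputable def eN {n : ℕ} (p : ℝ≥0∞) (f : E n → ℝ≥0∞) (μ : Measure (E n)) : ℝ≥0∞ :=
  if p = ∞ then essSup f μ else (∫⁻ y, f y ^ p.toReal ∂μ) ^ (1 / p.toReal)

/-- The two-weight class `H(r, αt, δt)` with constant `C`, where `r'` denotes the
conjugate exponent of `r` (so the `r = 1`, `r' = ∞` case is the essential supremum,
built into `eN`). -/
def Hclass (n : ℕ) (r' : ℝ≥0∞) (αt δ δt : ℝ) (v w : E n → ℝ≥0∞) (C : ℝ≥0∞) : Prop :=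
  ∀ (c : E n) (R : ℝ), 0 < R →
    essSup (fun y => (w y)⁻¹) (volume.restrict (ball c R)) *
        volume (ball c R) ^ ((δ - δt) / (n : ℝ)) *
        eN r' (fun y =>
          v y * (volume (ball c R) ^ ((1 : ℝ) / (n : ℝ)) +
            ENNReal.ofReal (dist c y)) ^ (-((n : ℝ) - αt + δ))) volume ≤ C

/-- The local condition (L) with constant `C`. -/
def LocalCond (n : ℕ) (r r' : ℝ≥0∞) (αt δt : ℝ) (v w : E n → ℝ≥0∞) (C : ℝ≥0∞) : Prop :=
  ∀ (c : E n) (R : ℝ), 0 < R →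
    essSup (fun y => (w y)⁻¹) (volume.restrict (ball c R)) *
        volume (ball c R) ^ ((αt - δt) / (n : ℝ) - r⁻¹.toReal) *
        eN r' v ((volume (ball c R))⁻¹ • volume.restrict (ball c R)) ≤ C

/-- The global condition (G) with constant `C`. -/
def GlobalCond (n : ℕ) (r' : ℝ≥0∞) (αt δ δt : ℝ) (v w : E n → ℝ≥0∞) (C : ℝ≥0∞) : Prop :=
  ∀ (c : E n) (R : ℝ), 0 < R →
    essSup (fun y => (w y)⁻¹) (volume.restrict (ball c R)) *
        volume (ball c R) ^ ((δ - δt) / (n : ℝ)) *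
        eN r' (fun y => v y * (ENNReal.ofReal (dist c y)) ^ (-((n : ℝ) - αt + δ)))
          (volume.restrict ((ball c R)ᶜ)) ≤ C

/-- `b ∈ Λ(δ)` with Lipschitz-`δ` constant `Cb`. -/
def LipDelta {n : ℕ} (δ Cb : ℝ) (b : E n → ℝ) : Prop :=
  ∀ x y : E n, |b x - b y| ≤ Cb * dist x y ^ δ

/-- The size condition `S*_α` with constant `A`. -/
def SizeCond (n : ℕ) (α A : ℝ) (K : E n → ℝ) : Prop :=
  ∀ x : E n, x ≠ 0 → |K x| ≤ A * ‖x‖ ^ (α - (n : ℝ))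

/-- The smoothness condition `H*_{α,∞}` with exponent `γ` and constant `A`. -/
def SmoothCond (n : ℕ) (α γ A : ℝ) (K : E n → ℝ) : Prop :=
  ∀ x x' y : E n, 2 * dist x x' ≤ dist x y →
    |K (x - y) - K (x' - y)| + |K (y - x) - K (y - x')| ≤
      A * dist x x' ^ γ / dist x y ^ ((n : ℝ) - α + γ)


open Filter Topology in
private theorem s6_essSup_ball {α : Type*} [MeasurableSpace α] [PseudoMetricSpace α]
    [TopologicalSpace.SeparableSpace α] [OpensMeasurableSpace α] (μ : Measure α) (f : α → ℝ≥0∞) :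
    ∀ᵐ x ∂μ, ∀ R : ℝ, 0 < R → f x ≤ essSup f (μ.restrict (ball x R)) := by
  obtain ⟨D, hDc, hDd⟩ := TopologicalSpace.exists_countable_dense α
  have h1 : ∀ᵐ x ∂μ, ∀ z ∈ D, ∀ k : ℕ,
      x ∈ ball z (1/(k+1)) → f x ≤ essSup f (μ.restrict (ball z (1/(k+1)))) := by
    rw [MeasureTheory.ae_ball_iff hDc]
    intro z _
    rw [ae_all_iff]
    intro k
    have := ENNReal.ae_le_essSup (μ := μ.restrict (ball z (1/(k+1):ℝ))) f
    rw [ae_restrict_iff' measurableSet_ball] at this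
    exact this
  filter_upwards [h1] with x hx R hR
  obtain ⟨k, hk⟩ := exists_nat_gt (2/R)
  have hk0 : (0:ℝ) < 1/(k+1) := by positivity
  have hkR : 2/(k+1) < R := by
    rw [div_lt_iff₀ (by positivity)]
    rw [div_lt_iff₀ hR] at hk
    nlinarith
  obtain ⟨z, hz⟩ := Metric.dense_iff.mp hDd x (1/(k+1)) hk0
  have hzx : dist x z < 1/(k+1) := by
    have := hz.1; rwa [mem_ball, dist_comm] at this
  have hsub : ball z (1/(k+1)) ⊆ ball x R := fun y hy => by
    rw [mem_ball] at hy ⊢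
    calc dist y x ≤ dist y z + dist z x := dist_triangle _ _ _
      _ < 1/(k+1) + 1/(k+1) := by rw [dist_comm z x]; linarith
      _ ≤ R := by rw [← add_div] at *; linarith
  exact (hx z hz.2 k (by rwa [mem_ball])).trans
    (essSup_mono_measure' (Measure.restrict_mono hsub le_rfl))

private theorem s6_stepC (n : ℕ) (hn : 1 ≤ n) (x : E n) (v : E n → ℝ≥0∞) (hvm : Measurable v)
    (p : ℝ) (hp0 : 0 < p) (B : ℝ≥0∞)
    (hJ : ∀ k : ℕ, (∫⁻ y, v y ^ p *
        ((volume (ball x (1/(k+1):ℝ))) ^ ((1:ℝ)/(n:ℝ)) + ENNReal.ofReal (dist x y)) ^ (-(n:ℝ))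
        ∂volume) ≤ B) :
    (∫⁻ y in {x}ᶜ, v y ^ p * (ENNReal.ofReal (dist x y)) ^ (-(n:ℝ)) ∂volume)
      ≤ (2:ℝ≥0∞)^(n:ℝ) * B := by
  have hn0 : (0:ℝ) < n := by exact_mod_cast Nat.pos_of_ne_zero (by omega)
  set A : ℕ → ℝ≥0∞ := fun k => (volume (ball x (1/(k+1):ℝ))) ^ ((1:ℝ)/(n:ℝ)) with hA
  set d : E n → ℝ≥0∞ := fun y => ENNReal.ofReal (dist x y) with hd
  set g : ℕ → E n → ℝ≥0∞ := fun k y => v y ^ p * (A k + d y) ^ (-(n:ℝ)) with hg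
  have hdm : Measurable d := by
    exact ENNReal.measurable_ofReal.comp
      (Continuous.measurable (continuous_const.dist continuous_id))
  have hgm : ∀ k, Measurable (g k) := by
    intro k
    exact (hvm.pow_const p).mul ((measurable_const.add hdm).pow_const _)
  have hgmono : Monotone g := by
    intro k l hkl y
    have hAle : A l ≤ A k := by
      apply ENNReal.rpow_le_rpow _ (by positivity)
      exact measure_mono (ball_subset_ball (by
        apply div_le_div_of_nonneg_left one_pos.le (by positivity)
        linarith [(Nat.cast_le (α := ℝ)).mpr hkl]))
    apply mul_le_mul_right
    rw [ENNReal.rpow_neg, ENNReal.rpow_neg]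
    exact ENNReal.inv_le_inv.mpr (ENNReal.rpow_le_rpow (add_le_add_left hAle _) hn0.le)
  have hpt : ∀ y ∈ ({x}ᶜ : Set (E n)), v y ^ p * d y ^ (-(n:ℝ)) ≤
      (2:ℝ≥0∞)^(n:ℝ) * ⨆ k, g k y := by
    intro y hy
    have hyx : y ≠ x := hy
    have hD : 0 < dist x y := dist_pos.mpr (Ne.symm hyx)
    obtain ⟨k, hk⟩ : ∃ k : ℕ, A k ≤ d y := by
      set V := volume (ball (0:E n) 1) with hV
      have hVfin : V ≠ ⊤ := measure_ball_lt_top.ne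
      set D := dist x y with hD2
      set ρ := min 1 (D^n / (V.toReal + 1)) with hρ
      have hρ0 : 0 < ρ := by
        apply lt_min one_pos
        positivity
      obtain ⟨k, hk⟩ := exists_nat_gt (1/ρ)
      refine ⟨k, ?_⟩
      have h1k : (1:ℝ)/(k+1) ≤ ρ := by
        rw [div_le_iff₀ (by positivity)]
        rw [div_lt_iff₀ hρ0] at hk
        nlinarith
      have hvol : volume (ball x (1/(k+1):ℝ)) ≤ (d y) ^ (n:ℝ) := by
        calc volume (ball x (1/(k+1):ℝ)) ≤ volume (ball x ρ) :=
              measure_mono (ball_subset_ball h1k)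
          _ = ENNReal.ofReal (ρ^n) * V := by
              rw [MeasureTheory.Measure.addHaar_ball_of_pos volume x hρ0,
                finrank_euclideanSpace_fin]
          _ ≤ ENNReal.ofReal (D^n) := by
              rw [← ENNReal.ofReal_toReal hVfin, ← ENNReal.ofReal_mul (by positivity)]
              apply ENNReal.ofReal_le_ofReal
              have h1 : ρ ^ n ≤ ρ := by
                calc ρ^n ≤ ρ^1 := pow_le_pow_of_le_one hρ0.le (min_le_left _ _) hn
                  _ = ρ := pow_one ρ
              have h2 : ρ * (V.toReal + 1) ≤ D^n := by
                rw [← le_div_iff₀ (by positivity)]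
                exact min_le_right _ _
              have hV0 : 0 ≤ V.toReal := ENNReal.toReal_nonneg
              nlinarith
          _ = (d y) ^ (n:ℝ) := by
              rw [hd, ENNReal.ofReal_rpow_of_pos hD, Real.rpow_natCast]
      calc A k = (volume (ball x (1/(k+1):ℝ))) ^ ((1:ℝ)/(n:ℝ)) := rfl
        _ ≤ ((d y) ^ (n:ℝ)) ^ ((1:ℝ)/(n:ℝ)) := ENNReal.rpow_le_rpow hvol (by positivity)
        _ = d y := by
            rw [← ENNReal.rpow_mul, mul_one_div, div_self hn0.ne', ENNReal.rpow_one]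
    have h2n0 : ((2:ℝ≥0∞)^(n:ℝ)) ≠ 0 := by
      simp [ENNReal.rpow_eq_zero_iff]
    have h2ntop : ((2:ℝ≥0∞)^(n:ℝ)) ≠ ⊤ := by
      simp [ENNReal.rpow_eq_top_iff]
    have hsum : A k + d y ≤ 2 * d y := by
      rw [two_mul]; exact add_le_add_left hk _
    have hkey : d y ^ (-(n:ℝ)) ≤ (2:ℝ≥0∞)^(n:ℝ) * (A k + d y) ^ (-(n:ℝ)) := by
      rw [ENNReal.rpow_neg, ENNReal.rpow_neg]
      have h1 : (A k + d y) ^ (n:ℝ) ≤ (2:ℝ≥0∞)^(n:ℝ) * d y ^ (n:ℝ) := by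
        rw [← ENNReal.mul_rpow_of_nonneg _ _ hn0.le]
        exact ENNReal.rpow_le_rpow hsum hn0.le
      calc (d y ^ (n:ℝ))⁻¹ = (2:ℝ≥0∞)^(n:ℝ) * ((2:ℝ≥0∞)^(n:ℝ) * d y ^ (n:ℝ))⁻¹ := by
            rw [ENNReal.mul_inv (Or.inl h2n0) (Or.inl h2ntop), ← mul_assoc,
              ENNReal.mul_inv_cancel h2n0 h2ntop, one_mul]
        _ ≤ (2:ℝ≥0∞)^(n:ℝ) * ((A k + d y) ^ (n:ℝ))⁻¹ := by
            exact mul_le_mul_right (ENNReal.inv_le_inv.mpr h1) _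
    calc v y ^ p * d y ^ (-(n:ℝ)) ≤ v y ^ p * ((2:ℝ≥0∞)^(n:ℝ) * (A k + d y) ^ (-(n:ℝ))) :=
          mul_le_mul_right hkey _
      _ = (2:ℝ≥0∞)^(n:ℝ) * g k y := by rw [hg]; ring
      _ ≤ (2:ℝ≥0∞)^(n:ℝ) * ⨆ j, g j y := mul_le_mul_right (le_iSup (fun j => g j y) k) _
  calc (∫⁻ y in {x}ᶜ, v y ^ p * d y ^ (-(n:ℝ)) ∂volume)
      ≤ ∫⁻ y in {x}ᶜ, (2:ℝ≥0∞)^(n:ℝ) * ⨆ k, g k y ∂volume := by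
        apply setLIntegral_mono (measurable_const.mul (Measurable.iSup hgm)) hpt
    _ ≤ ∫⁻ y, (2:ℝ≥0∞)^(n:ℝ) * ⨆ k, g k y ∂volume := setLIntegral_le_lintegral _ _
    _ = (2:ℝ≥0∞)^(n:ℝ) * ∫⁻ y, ⨆ k, g k y ∂volume :=
        lintegral_const_mul _ (Measurable.iSup hgm)
    _ = (2:ℝ≥0∞)^(n:ℝ) * ⨆ k, ∫⁻ y, g k y ∂volume := by rw [lintegral_iSup hgm hgmono]
    _ ≤ (2:ℝ≥0∞)^(n:ℝ) * B := mul_le_mul_right (iSup_le hJ) _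

open Filter Topology in
private theorem s6_stepD (n : ℕ) (hn : 1 ≤ n) (x : E n) (S : Set (E n)) (hSm : MeasurableSet S)
    (f : E n → ℝ≥0∞) (hfm : Measurable f) (κ : ℝ≥0∞) (hκ : κ ≠ 0)
    (hlow : ∀ y ∈ S, κ * (ENNReal.ofReal (dist x y)) ^ (-(n:ℝ)) ≤ f y)
    (hdens : Tendsto (fun r => volume (S ∩ closedBall x r) / volume (closedBall x r))
      (𝓝[>] (0:ℝ)) (𝓝 1)) :
    (∫⁻ y in {x}ᶜ, f y ∂volume) = ⊤ := by
  have hn0 : (0:ℝ) < n := by exact_mod_cast Nat.pos_of_ne_zero (by omega)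
  set V := volume (ball (0:E n) 1) with hV
  have hVfin : V ≠ ⊤ := measure_ball_lt_top.ne
  have hV0 : V ≠ 0 := (measure_ball_pos _ _ one_pos).ne'
  set ω := V.toReal with hω
  have hω0 : 0 < ω := ENNReal.toReal_pos hV0 hVfin
  have hev : ∀ᶠ r in 𝓝[>] (0:ℝ),
      (7/8 : ℝ≥0∞) < volume (S ∩ closedBall x r) / volume (closedBall x r) :=
    hdens.eventually (eventually_gt_nhds (by
      rw [ENNReal.div_lt_iff (Or.inl (by norm_num)) (Or.inl (by norm_num))]
      norm_num))
  rw [eventually_nhdsWithin_iff] at hev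
  rw [Metric.eventually_nhds_iff] at hev
  obtain ⟨ε, hε0, hεP⟩ := hev
  set t : ℕ → ℝ := fun j => (ε/2) / 2^j with ht
  have ht0 : ∀ j, 0 < t j := fun j => by positivity
  have htε : ∀ j, t j < ε := fun j => by
    rw [ht]
    calc (ε/2) / 2^j ≤ (ε/2)/2^0 := by
          apply div_le_div_of_nonneg_left (by positivity) (by norm_num)
          exact pow_le_pow_right₀ (by norm_num) (Nat.zero_le j)
      _ = ε/2 := by norm_num
      _ < ε := by linarith
  have hthalf : ∀ j, t (j+1) = t j / 2 := fun j => by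
    rw [ht]; simp [pow_succ]; ring
  have htanti : ∀ i j, i ≤ j → t j ≤ t i := fun i j hij => by
    rw [ht]
    apply div_le_div_of_nonneg_left (by positivity) (by positivity)
    exact pow_le_pow_right₀ (by norm_num) hij
  have hcb : ∀ ρ : ℝ, 0 < ρ → volume (closedBall x ρ) = ENNReal.ofReal (ρ^n * ω) := by
    intro ρ hρ
    rw [MeasureTheory.Measure.addHaar_closedBall volume x hρ.le, finrank_euclideanSpace_fin,
      ENNReal.ofReal_mul (by positivity), ← hV, hω, ENNReal.ofReal_toReal hVfin]
  set A : ℕ → Set (E n) := fun j => closedBall x (t j) \ closedBall x (t (j+1)) with hA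
  have hAm : ∀ j, MeasurableSet (S ∩ A j) := fun j =>
    hSm.inter (measurableSet_closedBall.diff measurableSet_closedBall)
  have hAx : ∀ j, x ∉ A j := fun j hj => hj.2 (mem_closedBall_self (ht0 _).le)
  have hdisj : Pairwise (Function.onFun Disjoint (fun j => S ∩ A j)) := by
    intro i j hij
    wlog hlt : i < j generalizing i j
    · exact (this hij.symm (by omega)).symm
    rw [Function.onFun, Set.disjoint_left]
    rintro y ⟨-, hyi⟩ ⟨-, hyj⟩
    exact hyi.2 (mem_closedBall.mpr ((mem_closedBall.mp hyj.1).trans (htanti _ _ hlt)))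
  have hmass : ∀ j, ENNReal.ofReal ((3/8) * (t j ^n * ω)) ≤ volume (S ∩ A j) := by
    intro j
    have hratio := hεP (y := t j)
      (by rw [Real.dist_eq, sub_zero, abs_of_pos (ht0 j)]; exact htε j)
      (Set.mem_Ioi.mpr (ht0 j))
    have hcbj := hcb (t j) (ht0 j)
    have hMne0 : volume (closedBall x (t j)) ≠ 0 := by
      rw [hcbj]; simp only [ne_eq, ENNReal.ofReal_eq_zero, not_le]; positivity
    have hMfin : volume (closedBall x (t j)) ≠ ⊤ := measure_closedBall_lt_top.ne
    have h78 : (7/8 : ℝ≥0∞) * volume (closedBall x (t j)) < volume (S ∩ closedBall x (t j)) :=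
      (ENNReal.lt_div_iff_mul_lt (Or.inl hMne0) (Or.inl hMfin)).mp hratio
    have h78' : ENNReal.ofReal ((7/8) * (t j ^n * ω)) ≤ volume (S ∩ closedBall x (t j)) := by
      refine le_trans (le_of_eq ?_) h78.le
      rw [hcbj, ENNReal.ofReal_mul (by norm_num)]
      congr 1
      rw [ENNReal.ofReal_div_of_pos (by norm_num)]
      norm_num
    have hsmall : volume (closedBall x (t (j+1))) ≤ ENNReal.ofReal ((1/2) * (t j ^n * ω)) := by
      rw [hcb _ (ht0 (j+1)), hthalf j]
      apply ENNReal.ofReal_le_ofReal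
      have h2n : (2:ℝ) ≤ 2^n := by
        calc (2:ℝ) = 2^1 := (pow_one 2).symm
        _ ≤ 2^n := pow_le_pow_right₀ (by norm_num) hn
      have heq : (t j / 2)^n * ω = t j ^n * ω / 2^n := by rw [div_pow]; ring
      rw [heq]
      calc t j ^n * ω / 2^n ≤ t j ^n * ω / 2 :=
            div_le_div_of_nonneg_left (by positivity) (by norm_num) h2n
        _ = 1/2 * (t j^n * ω) := by ring
    have hsub : S ∩ closedBall x (t j) ⊆ (S ∩ A j) ∪ closedBall x (t (j+1)) := by
      rintro y ⟨hyS, hycb⟩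
      by_cases h : y ∈ closedBall x (t (j+1))
      · exact Or.inr h
      · exact Or.inl ⟨hyS, hycb, h⟩
    have hle : volume (S ∩ closedBall x (t j)) ≤
        volume (S ∩ A j) + volume (closedBall x (t (j+1))) :=
      (measure_mono hsub).trans (measure_union_le _ _)
    have heq38 : ENNReal.ofReal ((3/8) * (t j ^n * ω)) =
        ENNReal.ofReal ((7/8) * (t j ^n * ω)) - ENNReal.ofReal ((1/2) * (t j ^n * ω)) := by
      rw [← ENNReal.ofReal_sub _ (by positivity)]
      congr 1; ring
    rw [heq38]
    refine le_trans (tsub_le_tsub h78' hsmall) ?_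
    exact tsub_le_iff_right.mpr hle
  have hterm : ∀ j, κ * ENNReal.ofReal ((3/8) * ω) ≤ ∫⁻ y in S ∩ A j, f y ∂volume := by
    intro j
    have hptj : ∀ y ∈ S ∩ A j, κ * (ENNReal.ofReal (t j)) ^ (-(n:ℝ)) ≤ f y := by
      rintro y ⟨hyS, hyA⟩
      refine le_trans (mul_le_mul_right ?_ κ) (hlow y hyS)
      rw [ENNReal.rpow_neg, ENNReal.rpow_neg]
      apply ENNReal.inv_le_inv.mpr
      apply ENNReal.rpow_le_rpow _ hn0.le
      apply ENNReal.ofReal_le_ofReal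
      have := hyA.1
      rwa [mem_closedBall, dist_comm] at this
    calc κ * ENNReal.ofReal ((3/8) * ω)
        = (κ * (ENNReal.ofReal (t j)) ^ (-(n:ℝ))) * ENNReal.ofReal ((3/8) * (t j ^n * ω)) := by
          have hofr : ENNReal.ofReal ((3/8) * (t j ^n * ω)) =
              (ENNReal.ofReal (t j)) ^ (n:ℝ) * ENNReal.ofReal ((3/8) * ω) := by
            rw [ENNReal.ofReal_rpow_of_pos (ht0 j), Real.rpow_natCast,
              ← ENNReal.ofReal_mul (by positivity)]
            congr 1; ring
          rw [hofr, mul_assoc, ← mul_assoc ((ENNReal.ofReal (t j)) ^ (-(n:ℝ))),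
            ← ENNReal.rpow_add _ _ (by simp [(ht0 j).not_ge, (ht0 j)]) ENNReal.ofReal_ne_top]
          norm_num
      _ ≤ (κ * (ENNReal.ofReal (t j)) ^ (-(n:ℝ))) * volume (S ∩ A j) :=
          mul_le_mul_right (hmass j) _
      _ = ∫⁻ _ in S ∩ A j, (κ * (ENNReal.ofReal (t j)) ^ (-(n:ℝ))) ∂volume :=
          (setLIntegral_const _ _).symm
      _ ≤ ∫⁻ y in S ∩ A j, f y ∂volume := setLIntegral_mono hfm hptj
  set ν := volume.withDensity f with hν
  have hνA : ∀ (T : Set (E n)), MeasurableSet T → ν T = ∫⁻ y in T, f y ∂volume := fun T hT =>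
    withDensity_apply f hT
  have hUsub : (⋃ j, S ∩ A j) ⊆ {x}ᶜ := by
    rintro y ⟨T, ⟨j, rfl⟩, hyT⟩
    intro hyx
    simp only [Set.mem_singleton_iff] at hyx
    exact hAx j (hyx ▸ hyT.2)
  have htop : (⊤:ℝ≥0∞) ≤ ν {x}ᶜ := by
    calc (⊤:ℝ≥0∞) = ∑' _ : ℕ, κ * ENNReal.ofReal ((3/8) * ω) :=
          (ENNReal.tsum_const_eq_top_of_ne_zero (by
            apply mul_ne_zero hκ
            simp only [ne_eq, ENNReal.ofReal_eq_zero, not_le]; positivity)).symm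
      _ ≤ ∑' j, ν (S ∩ A j) := ENNReal.tsum_le_tsum (fun j => by
            rw [hνA _ (hAm j)]; exact hterm j)
      _ = ν (⋃ j, S ∩ A j) := (measure_iUnion hdisj hAm).symm
      _ ≤ ν {x}ᶜ := measure_mono hUsub
  rw [← hνA _ (measurableSet_singleton x).compl]
  exact top_le_iff.mp htop

/-- if `δ̃ = δ = α̃ − n/r`, any pair `(v,w) ∈ H(r, α̃, δ̃)` with
`w` locally integrable has `v = 0` a.e. -/
theorem statement6 (n m : ℕ) (α δ δt αt : ℝ) (r r' : ℝ≥0∞)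
    (hn : 1 ≤ n) (hα0 : 0 ≤ α) (hαn : α < (n : ℝ)) (hδ0 : 0 < δ) (hδ1 : δ < 1)
    (hmδ : (m : ℝ) * δ < (n : ℝ) - α) (hαt : αt = (m : ℝ) * δ + α)
    (hr : 1 ≤ r) (hconj : r⁻¹ + r'⁻¹ = 1)
    (hδδt : δt = δ) (hδeq : δ = αt - (n : ℝ) * r⁻¹.toReal)
    (v w : E n → ℝ≥0∞) (hvm : Measurable v) (hwm : Measurable w)
    (hwloc : ∀ (c : E n) (R : ℝ), 0 < R → (∫⁻ y in ball c R, w y) < ∞)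
    (C : ℝ≥0) (hH : Hclass n r' αt δ δt v w (C : ℝ≥0∞)) :
    ∀ᵐ x ∂(volume : Measure (E n)), v x = 0 := by
  -- exponent bookkeeping
  rw [hδδt] at hH
  have hrne0 : r ≠ 0 := by positivity
  have hinvfin : r⁻¹ ≠ ⊤ := ENNReal.inv_ne_top.mpr hrne0
  have hr'ge1 : 1 ≤ r' := by
    rw [← ENNReal.inv_le_one, ← hconj]; exact le_add_self
  have hr'top : r' ≠ ⊤ := by
    intro h
    rw [h, ENNReal.inv_top, add_zero, ENNReal.inv_eq_one] at hconj
    rw [hconj] at hδeq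
    simp only [ENNReal.toReal_one, inv_one] at hδeq
    rw [hαt] at hδeq
    nlinarith [hmδ, hδ0]
  have hr'ne0 : r' ≠ 0 := by
    intro h; rw [h] at hr'ge1; simp at hr'ge1
  have hinv'fin : r'⁻¹ ≠ ⊤ := ENNReal.inv_ne_top.mpr hr'ne0
  have hsum : (r⁻¹).toReal + (r'⁻¹).toReal = 1 := by
    rw [← ENNReal.toReal_add hinvfin hinv'fin, hconj, ENNReal.toReal_one]
  have hp0 : 0 < r'.toReal := ENNReal.toReal_pos hr'ne0 hr'top
  have hinv' : (r'⁻¹).toReal = r'.toReal⁻¹ := ENNReal.toReal_inv _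
  have hkey : ((n:ℝ) - αt + δ) * r'.toReal = n := by
    have h1 : (n:ℝ) - αt + δ = n * r'.toReal⁻¹ := by
      rw [hδeq]; rw [hinv'] at hsum; nlinarith
    rw [h1]
    field_simp
  set p := r'.toReal with hp
  -- Step A: cleaned form of the H-class inequality
  have hstepA : ∀ (c : E n) (R : ℝ), 0 < R →
      essSup (fun y => (w y)⁻¹) (volume.restrict (ball c R)) *
        (∫⁻ y, v y ^ p * (volume (ball c R) ^ ((1 : ℝ) / (n : ℝ)) +
          ENNReal.ofReal (dist c y)) ^ (-(n:ℝ)) ∂volume) ^ (1 / p) ≤ (C : ℝ≥0∞) := by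
    intro c R hR
    have h := hH c R hR
    rw [sub_self, zero_div, ENNReal.rpow_zero, mul_one] at h
    unfold eN at h
    rw [if_neg hr'top] at h
    have heq : ∀ y : E n, v y ^ p * (volume (ball c R) ^ ((1 : ℝ) / (n : ℝ)) +
          ENNReal.ofReal (dist c y)) ^ (-(n:ℝ)) =
        (v y * (volume (ball c R) ^ ((1 : ℝ) / (n : ℝ)) +
          ENNReal.ofReal (dist c y)) ^ (-((n : ℝ) - αt + δ))) ^ r'.toReal := by
      intro y
      rw [ENNReal.mul_rpow_of_nonneg _ _ hp0.le, ← ENNReal.rpow_mul, neg_mul, hkey, hp]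
    rw [lintegral_congr heq]
    exact h
  -- w is a.e. finite
  have hwfin : ∀ᵐ x ∂(volume : Measure (E n)), w x < ⊤ := by
    have h1 : ∀ k : ℕ, ∀ᵐ x ∂(volume : Measure (E n)), x ∈ ball (0:E n) (k+1) → w x < ⊤ := by
      intro k
      have := ae_lt_top hwm (hwloc 0 (k+1) (by positivity)).ne
      rwa [ae_restrict_iff' measurableSet_ball] at this
    rw [← ae_all_iff] at h1
    filter_upwards [h1] with x hx
    obtain ⟨k, hk⟩ := exists_nat_gt ‖x‖
    exact hx k (mem_ball_zero_iff.mpr (by linarith))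
  -- a.e. finiteness of the singular integral
  have hfinae : ∀ᵐ x ∂(volume : Measure (E n)),
      (∫⁻ y in {x}ᶜ, v y ^ p * (ENNReal.ofReal (dist x y)) ^ (-(n:ℝ)) ∂volume) < ⊤ := by
    filter_upwards [hwfin, s6_essSup_ball (volume : Measure (E n)) (fun y => (w y)⁻¹)]
      with x hwx hess
    have hJ : ∀ k : ℕ, (∫⁻ y, v y ^ p *
        ((volume (ball x (1/(k+1):ℝ))) ^ ((1:ℝ)/(n:ℝ)) + ENNReal.ofReal (dist x y)) ^ (-(n:ℝ))
        ∂volume) ≤ ((C : ℝ≥0∞) * w x) ^ p := by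
      intro k
      have hR : (0:ℝ) < 1/(k+1) := by positivity
      have hA := hstepA x (1/(k+1)) hR
      have hess1 := hess (1/(k+1)) hR
      set J := ∫⁻ y, v y ^ p * ((volume (ball x (1/(k+1):ℝ))) ^ ((1:ℝ)/(n:ℝ)) +
        ENNReal.ofReal (dist x y)) ^ (-(n:ℝ)) ∂volume with hJdef
      have h1 : (w x)⁻¹ * J ^ (1/p) ≤ (C : ℝ≥0∞) :=
        le_trans (mul_le_mul_left hess1 _) hA
      have h2 : J ^ (1/p) ≤ (C : ℝ≥0∞) * w x := by
        rcases eq_or_ne (w x) 0 with h0 | h0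
        · rcases eq_or_ne (J ^ (1/p)) 0 with hT | hT
          · rw [hT]; exact zero_le
          · exfalso
            rw [h0, ENNReal.inv_zero, ENNReal.top_mul hT] at h1
            exact ENNReal.coe_ne_top (top_le_iff.mp h1)
        · calc J ^ (1/p) = w x * ((w x)⁻¹ * J ^ (1/p)) := by
                rw [← mul_assoc, ENNReal.mul_inv_cancel h0 hwx.ne, one_mul]
            _ ≤ w x * (C : ℝ≥0∞) := mul_le_mul_right h1 _
            _ = (C : ℝ≥0∞) * w x := mul_comm _ _
      calc J = (J ^ (1/p)) ^ p := by
            rw [← ENNReal.rpow_mul, one_div, inv_mul_cancel₀ hp0.ne', ENNReal.rpow_one]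
        _ ≤ ((C : ℝ≥0∞) * w x) ^ p := ENNReal.rpow_le_rpow h2 hp0.le
    have hC := s6_stepC n hn x v hvm p hp0 (((C : ℝ≥0∞) * w x) ^ p) hJ
    refine lt_of_le_of_lt hC ?_
    apply ENNReal.mul_lt_top
    · exact ENNReal.rpow_lt_top_of_nonneg (by positivity) (by norm_num)
    · exact ENNReal.rpow_lt_top_of_nonneg hp0.le
        (ENNReal.mul_ne_top ENNReal.coe_ne_top hwx.ne)
  -- suppose v is not a.e. zero
  by_contra hcon
  have hpos : ∃ k : ℕ, volume ({x : E n | ((k:ℝ≥0∞)+1)⁻¹ ≤ v x} ∩ ball (0:E n) (k+1)) ≠ 0 := by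
    by_contra hc
    push_neg at hc
    apply hcon
    rw [ae_iff]
    have hsub : {x : E n | ¬ v x = 0} ⊆
        ⋃ k : ℕ, {x : E n | ((k:ℝ≥0∞)+1)⁻¹ ≤ v x} ∩ ball (0:E n) (k+1) := by
      intro x hx
      simp only [Set.mem_setOf_eq] at hx
      obtain ⟨k1, hk1⟩ : ∃ k1 : ℕ, ((k1:ℝ≥0∞)+1)⁻¹ ≤ v x := by
        rcases eq_or_ne (v x) ⊤ with htop | htop
        · exact ⟨0, by rw [htop]; exact le_top⟩
        · obtain ⟨j, hj⟩ := ENNReal.exists_inv_nat_lt hx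
          exact ⟨j, le_trans (ENNReal.inv_le_inv.mpr (by
            exact_mod_cast le_self_add)) hj.le⟩
      obtain ⟨k2, hk2⟩ := exists_nat_gt ‖x‖
      refine Set.mem_iUnion.mpr ⟨max k1 k2, ?_, ?_⟩
      · refine le_trans (ENNReal.inv_le_inv.mpr ?_) hk1
        have h1 : (k1:ℝ≥0∞) ≤ ((max k1 k2 : ℕ) : ℝ≥0∞) := by
          exact_mod_cast Nat.le_max_left k1 k2
        exact add_le_add_left h1 1
      · apply mem_ball_zero_iff.mpr
        have h2 : (k2:ℝ) ≤ ((max k1 k2 : ℕ) : ℝ) := by exact_mod_cast Nat.le_max_right k1 k2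
        linarith
    exact measure_mono_null hsub (measure_iUnion_null hc)
  obtain ⟨k, hk⟩ := hpos
  set S : Set (E n) := {x : E n | ((k:ℝ≥0∞)+1)⁻¹ ≤ v x} ∩ ball (0:E n) (k+1) with hSdef
  have hSm : MeasurableSet S :=
    (measurableSet_le measurable_const hvm).inter measurableSet_ball
  have hdens0 := Besicovitch.ae_tendsto_measure_inter_div_of_measurableSet
    (volume : Measure (E n)) hSm
  obtain ⟨x, hxS, hxP⟩ :=
    MeasureTheory.Measure.exists_mem_of_measure_ne_zero_of_ae hk
      ((ae_restrict_iff' hSm).mpr (by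
        filter_upwards [hfinae.and hdens0] with x hx _
        exact hx))
  have hxfin := hxP.1
  have hxdens := hxP.2
  have hxdens' : Filter.Tendsto
      (fun r => volume (S ∩ closedBall x r) / volume (closedBall x r))
      (nhdsWithin 0 (Set.Ioi 0)) (nhds 1) := by
    rwa [Set.indicator_of_mem hxS, Pi.one_apply] at hxdens
  set κ : ℝ≥0∞ := (((k:ℝ≥0∞)+1)⁻¹) ^ p with hκdef
  have hκ0 : κ ≠ 0 := by
    rw [hκdef]
    simp only [ne_eq, ENNReal.rpow_eq_zero_iff, not_or]
    constructor
    · rintro ⟨h1, -⟩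
      exact (ENNReal.inv_ne_zero.mpr (by
        exact_mod_cast (ENNReal.add_lt_top.mpr ⟨ENNReal.natCast_lt_top k, ENNReal.one_lt_top⟩).ne)) h1
    · rintro ⟨h1, -⟩
      exact (by simp : ((k:ℝ≥0∞)+1)⁻¹ ≠ ⊤) h1
  have hlow : ∀ y ∈ S, κ * (ENNReal.ofReal (dist x y)) ^ (-(n:ℝ)) ≤
      v y ^ p * (ENNReal.ofReal (dist x y)) ^ (-(n:ℝ)) := by
    intro y hy
    exact mul_le_mul_left (ENNReal.rpow_le_rpow hy.1 hp0.le) _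
  have hdm : Measurable (fun y : E n => v y ^ p * (ENNReal.ofReal (dist x y)) ^ (-(n:ℝ))) := by
    exact (hvm.pow_const p).mul
      ((ENNReal.measurable_ofReal.comp
        (Continuous.measurable (continuous_const.dist continuous_id))).pow_const _)
  have hD := s6_stepD n hn x S hSm _ hdm κ hκ0 hlow hxdens'
  rw [hD] at hxfin
  exact lt_irrefl _ hxfin
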